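/- Let B be a Hermitian n×n complex matrix and let μ be a finite Borel measure on ℂⁿ with μ({0}) = 0. Then the function g : ℝ → ℝ, g(t) = ∫ (‖exp(t·B)·z‖²/‖z‖²) dμ(z), is differentiable at 0 with derivative g'(0) = 2·∫ (Re⟪B·z, z⟫/‖z‖²) dμ(z), where exp denotes the matrix exponential, ‖·‖ the Euclidean norm and ⟪·,·⟫ the Hermitian inner product on ℂⁿ. -/

import Mathlib

open Matrix MeasureTheory

set_option maxHeartbeats 1000000 in
set_option synthInstance.maxHeartbeats 400000 in
/-- Auxiliary general statement: differentiation under the integral sign for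
`t ↦ ∫ ‖exp (t • A) z‖² / ‖z‖² dμ(z)` where `A` is a continuous linear operator on a
complete complex inner product space. -/
theorem aux_hasDerivAt_integral_sq_norm_exp_smul
    {E : Type*} [NormedAddCommGroup E] [InnerProductSpace ℂ E] [CompleteSpace E]
    [MeasurableSpace E] [OpensMeasurableSpace E]
    (μ : Measure E) [IsFiniteMeasure μ] (A : E →L[ℂ] E) :
    HasDerivAt
      (fun t : ℝ => ∫ z : E, ‖NormedSpace.exp (t • A) z‖ ^ 2 / ‖z‖ ^ 2 ∂μ)
      (∫ z : E, (2 * (inner ℂ (A z) z : ℂ).re) / ‖z‖ ^ 2 ∂μ) 0 := by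
  classical
  set F : ℝ → E → ℝ := fun t z => ‖NormedSpace.exp (t • A) z‖ ^ 2 / ‖z‖ ^ 2 with hF
  set F' : ℝ → E → ℝ := fun t z =>
    (2 * (inner ℂ ((NormedSpace.exp (t • A) * A) z) (NormedSpace.exp (t • A) z) : ℂ).re)
      / ‖z‖ ^ 2 with hF'
  -- pointwise differentiability
  have hdiff : ∀ (z : E) (t : ℝ), HasDerivAt (fun u => F u z) (F' t z) t := by
    intro z t
    have hexp : HasDerivAt (fun u : ℝ => NormedSpace.exp (u • A))
        (NormedSpace.exp (t • A) * A) t := hasDerivAt_exp_smul_const A t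
    have hv : HasDerivAt (fun u : ℝ => NormedSpace.exp (u • A) z)
        ((NormedSpace.exp (t • A) * A) z) t := by
      have h := ((ContinuousLinearMap.apply ℂ E z).restrictScalars ℝ).hasFDerivAt.comp_hasDerivAt
        t hexp
      exact h
    have hinner : HasDerivAt
        (fun u : ℝ => (inner ℂ (NormedSpace.exp (u • A) z) (NormedSpace.exp (u • A) z) : ℂ))
        ((inner ℂ (NormedSpace.exp (t • A) z) ((NormedSpace.exp (t • A) * A) z) : ℂ)
          + (inner ℂ ((NormedSpace.exp (t • A) * A) z) (NormedSpace.exp (t • A) z) : ℂ)) t :=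
      hv.inner ℂ hv
    have hre : HasDerivAt
        (fun u : ℝ => ((inner ℂ (NormedSpace.exp (u • A) z)
            (NormedSpace.exp (u • A) z) : ℂ)).re)
        (((inner ℂ (NormedSpace.exp (t • A) z) ((NormedSpace.exp (t • A) * A) z) : ℂ)
          + (inner ℂ ((NormedSpace.exp (t • A) * A) z) (NormedSpace.exp (t • A) z) : ℂ)).re)
        t := Complex.reCLM.hasFDerivAt.comp_hasDerivAt t hinner
    have heq : (fun u : ℝ => ((inner ℂ (NormedSpace.exp (u • A) z)
        (NormedSpace.exp (u • A) z) : ℂ)).re)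
        = fun u : ℝ => ‖NormedSpace.exp (u • A) z‖ ^ 2 := by
      funext u
      have := inner_self_eq_norm_sq (𝕜 := ℂ) (NormedSpace.exp (u • A) z)
      simpa using this
    rw [heq] at hre
    have hval : (((inner ℂ (NormedSpace.exp (t • A) z) ((NormedSpace.exp (t • A) * A) z) : ℂ)
          + (inner ℂ ((NormedSpace.exp (t • A) * A) z) (NormedSpace.exp (t • A) z) : ℂ)).re)
        = 2 * (inner ℂ ((NormedSpace.exp (t • A) * A) z) (NormedSpace.exp (t • A) z) : ℂ).re := by
      rw [← inner_conj_symm ((NormedSpace.exp (t • A) * A) z) (NormedSpace.exp (t • A) z),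
        Complex.add_re, Complex.conj_re]
      ring
    rw [hval] at hre
    exact hre.div_const (‖z‖ ^ 2)
  -- a uniform bound for `‖exp ℝ (t • A)‖`, `t ∈ [-1, 1]`
  obtain ⟨C, hC⟩ : ∃ C, ∀ t ∈ Set.Icc (-1 : ℝ) 1, ‖NormedSpace.exp (t • A)‖ ≤ C := by
    letI : NormedAlgebra ℚ (E →L[ℂ] E) := .restrictScalars ℚ ℂ _
    have hcont : ContinuousOn (fun t : ℝ => NormedSpace.exp (t • A)) (Set.Icc (-1) 1) :=
      (NormedSpace.exp_continuous.comp (continuous_id.smul continuous_const)).continuousOn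
    exact isCompact_Icc.exists_bound_of_continuousOn hcont
  have hC0 : 0 ≤ C := le_trans (norm_nonneg _) (hC 0 (by norm_num))
  have hbd0 : (0:ℝ) ≤ 2 * C * C * ‖A‖ := by
    have := mul_nonneg (mul_nonneg (mul_nonneg (by norm_num : (0:ℝ) ≤ 2) hC0) hC0)
      (norm_nonneg A)
    linarith
  -- measurability facts
  have hFmeas : ∀ t : ℝ, AEStronglyMeasurable (F t) μ := by
    intro t
    apply Measurable.aestronglyMeasurable
    exact (((NormedSpace.exp (t • A)).continuous.norm.pow 2).measurable).div
      ((continuous_norm.pow 2).measurable)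
  have hF'meas : AEStronglyMeasurable (F' 0) μ := by
    apply Measurable.aestronglyMeasurable
    have h1 : Continuous fun z : E =>
        (2 * (inner ℂ ((NormedSpace.exp ((0:ℝ) • A) * A) z)
          (NormedSpace.exp ((0:ℝ) • A) z) : ℂ).re) := by
      have : Continuous fun z : E => (inner ℂ ((NormedSpace.exp ((0:ℝ) • A) * A) z)
          (NormedSpace.exp ((0:ℝ) • A) z) : ℂ) :=
        Continuous.inner (NormedSpace.exp ((0:ℝ) • A) * A).continuous
          (NormedSpace.exp ((0:ℝ) • A)).continuous
      exact continuous_const.mul (Complex.continuous_re.comp this)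
    exact h1.measurable.div ((continuous_norm.pow 2).measurable)
  -- integrability of `F 0`
  have hFint : Integrable (F 0) μ := by
    refine Integrable.mono' (integrable_const (1 : ℝ)) (hFmeas 0) ?_
    filter_upwards with z
    have h0 : F 0 z = ‖z‖ ^ 2 / ‖z‖ ^ 2 := by
      rw [hF]
      simp only [zero_smul, NormedSpace.exp_zero, ContinuousLinearMap.one_apply]
    rw [Real.norm_eq_abs, h0]
    rcases eq_or_ne (‖z‖ ^ 2) 0 with h | h
    · simp [h]
    · rw [div_self h]; norm_num
  -- the uniform bound on the derivative
  have hbound : ∀ z : E, ∀ t ∈ Metric.ball (0 : ℝ) 1, ‖F' t z‖ ≤ 2 * C * C * ‖A‖ := by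
    intro z t ht
    have htI : t ∈ Set.Icc (-1 : ℝ) 1 := by
      have := Metric.mem_ball.mp ht
      rw [Real.dist_eq, sub_zero] at this
      constructor <;> [linarith [neg_abs_le t]; linarith [le_abs_self t]]
    have hCexp := hC t htI
    rcases eq_or_ne z 0 with rfl | hz
    · have h0 : F' t 0 = 0 := by simp [hF']
      rw [h0, norm_zero]
      exact hbd0
    · have hz2 : (0:ℝ) < ‖z‖ ^ 2 := pow_pos (norm_pos_iff.mpr hz) 2
      have hnum : |(2 * (inner ℂ ((NormedSpace.exp (t • A) * A) z)
          (NormedSpace.exp (t • A) z) : ℂ).re)| ≤ 2 * C * C * ‖A‖ * ‖z‖ ^ 2 := by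
        have h1 : |(inner ℂ ((NormedSpace.exp (t • A) * A) z)
            (NormedSpace.exp (t • A) z) : ℂ).re|
            ≤ ‖(NormedSpace.exp (t • A) * A) z‖ * ‖NormedSpace.exp (t • A) z‖ := by
          refine le_trans (Complex.abs_re_le_norm _) ?_
          exact norm_inner_le_norm _ _
        have h2 : ‖(NormedSpace.exp (t • A) * A) z‖ ≤ C * ‖A‖ * ‖z‖ := by
          calc ‖(NormedSpace.exp (t • A) * A) z‖
              ≤ ‖NormedSpace.exp (t • A) * A‖ * ‖z‖ :=
                (NormedSpace.exp (t • A) * A).le_opNorm z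
            _ ≤ ‖NormedSpace.exp (t • A)‖ * ‖A‖ * ‖z‖ := by
                gcongr; exact norm_mul_le _ _
            _ ≤ C * ‖A‖ * ‖z‖ := by gcongr
        have h3 : ‖NormedSpace.exp (t • A) z‖ ≤ C * ‖z‖ := by
          calc ‖NormedSpace.exp (t • A) z‖ ≤ ‖NormedSpace.exp (t • A)‖ * ‖z‖ :=
                (NormedSpace.exp (t • A)).le_opNorm z
            _ ≤ C * ‖z‖ := by gcongr
        have h4 : ‖(NormedSpace.exp (t • A) * A) z‖ * ‖NormedSpace.exp (t • A) z‖
            ≤ (C * ‖A‖ * ‖z‖) * (C * ‖z‖) :=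
          mul_le_mul h2 h3 (norm_nonneg _) (by positivity)
        rw [abs_mul]
        have h5 : |(2:ℝ)| = 2 := by norm_num
        rw [h5]
        nlinarith [norm_nonneg z, norm_nonneg A,
          abs_nonneg ((inner ℂ ((NormedSpace.exp (t • A) * A) z)
            (NormedSpace.exp (t • A) z) : ℂ).re)]
      have hFeq : ‖F' t z‖ = |(2 * (inner ℂ ((NormedSpace.exp (t • A) * A) z)
          (NormedSpace.exp (t • A) z) : ℂ).re)| / ‖z‖ ^ 2 := by
        rw [hF', Real.norm_eq_abs, abs_div, abs_of_pos hz2]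
      rw [hFeq, div_le_iff₀ hz2]
      exact hnum
  -- apply the dominated differentiation theorem
  have main := hasDerivAt_integral_of_dominated_loc_of_deriv_le
    (F := F) (F' := F') (x₀ := (0:ℝ)) (bound := fun _ => 2 * C * C * ‖A‖)
    (μ := μ) (Metric.ball_mem_nhds 0 one_pos)
    (Filter.Eventually.of_forall hFmeas) hFint hF'meas
    (Filter.Eventually.of_forall fun z => hbound z)
    (integrable_const _)
    (Filter.Eventually.of_forall fun z t _ => hdiff z t)
  obtain ⟨-, hmain⟩ := main
  have hval0 : (fun z : E => F' 0 z)
      = fun z : E => (2 * (inner ℂ (A z) z : ℂ).re) / ‖z‖ ^ 2 := by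
    funext z
    rw [hF']
    simp only [zero_smul, NormedSpace.exp_zero, one_mul, ContinuousLinearMap.one_apply]
  rw [hval0] at hmain
  exact hmain

set_option maxHeartbeats 1000000 in
set_option synthInstance.maxHeartbeats 400000 in
/-- for `B` Hermitian and `μ` a finite Borel measure on `ℂⁿ` with
`μ {0} = 0`, the function `g(t) = ∫ ‖exp (t • B) z‖² / ‖z‖² dμ(z)` is differentiable
at `0` with derivative `g'(0) = 2 · ∫ Re ⟪B z, z⟫ / ‖z‖² dμ(z)`. -/
theorem hasDerivAt_integral_sq_norm_exp_smul
    (n : ℕ) (B : Matrix (Fin n) (Fin n) ℂ) (hB : Bᴴ = B)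
    [MeasurableSpace (EuclideanSpace ℂ (Fin n))] [BorelSpace (EuclideanSpace ℂ (Fin n))]
    (μ : Measure (EuclideanSpace ℂ (Fin n))) [IsFiniteMeasure μ]
    (hμ0 : μ {0} = 0) :
    HasDerivAt
      (fun t : ℝ => ∫ z : EuclideanSpace ℂ (Fin n),
        ‖Matrix.toEuclideanLin (NormedSpace.exp (t • B)) z‖ ^ 2 / ‖z‖ ^ 2 ∂μ)
      (2 * ∫ z : EuclideanSpace ℂ (Fin n),
        (inner ℂ (Matrix.toEuclideanLin B z) z : ℂ).re / ‖z‖ ^ 2 ∂μ) 0 := by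
  classical
  set A : EuclideanSpace ℂ (Fin n) →L[ℂ] EuclideanSpace ℂ (Fin n) :=
    Matrix.toEuclideanCLM (𝕜 := ℂ) B with hA
  let Ψ : Matrix (Fin n) (Fin n) ℂ →ₗ[ℂ]
      (EuclideanSpace ℂ (Fin n) →L[ℂ] EuclideanSpace ℂ (Fin n)) :=
    { toFun := fun M => Matrix.toEuclideanCLM (𝕜 := ℂ) M
      map_add' := fun x y => map_add _ x y
      map_smul' := fun c x => map_smul _ c x }
  have hΨcont : Continuous Ψ := Ψ.continuous_of_finiteDimensional
  have key : ∀ (t : ℝ) (z : EuclideanSpace ℂ (Fin n)),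
      Matrix.toEuclideanLin (NormedSpace.exp (t • B)) z = NormedSpace.exp (t • A) z := by
    intro t z
    letI : SeminormedRing (Matrix (Fin n) (Fin n) ℂ) := Matrix.linftyOpSemiNormedRing
    letI : NormedRing (Matrix (Fin n) (Fin n) ℂ) := Matrix.linftyOpNormedRing
    letI : NormedAlgebra ℂ (Matrix (Fin n) (Fin n) ℂ) := Matrix.linftyOpNormedAlgebra
    letI : NormedAlgebra ℚ (Matrix (Fin n) (Fin n) ℂ) := .restrictScalars ℚ ℂ _
    haveI : CompleteSpace (Matrix (Fin n) (Fin n) ℂ) := FiniteDimensional.complete ℂ _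
    have h1 : Matrix.toEuclideanLin (NormedSpace.exp (t • B)) z
        = Matrix.toEuclideanCLM (𝕜 := ℂ) (NormedSpace.exp (t • B)) z := rfl
    have h2 : (Matrix.toEuclideanCLM (𝕜 := ℂ) (NormedSpace.exp (t • B))
          : EuclideanSpace ℂ (Fin n) →L[ℂ] EuclideanSpace ℂ (Fin n))
        = NormedSpace.exp (Matrix.toEuclideanCLM (𝕜 := ℂ) (t • B)) :=
      NormedSpace.map_exp (Matrix.toEuclideanCLM (𝕜 := ℂ)) hΨcont (t • B)
    have h3 : (Matrix.toEuclideanCLM (𝕜 := ℂ) (t • B)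
          : EuclideanSpace ℂ (Fin n) →L[ℂ] EuclideanSpace ℂ (Fin n)) = t • A :=
      Ψ.map_smul_of_tower t B
    rw [h1, h2, h3]
  have hmain := aux_hasDerivAt_integral_sq_norm_exp_smul μ A
  have hfun : (fun t : ℝ => ∫ z : EuclideanSpace ℂ (Fin n),
      ‖Matrix.toEuclideanLin (NormedSpace.exp (t • B)) z‖ ^ 2 / ‖z‖ ^ 2 ∂μ)
      = fun t : ℝ => ∫ z : EuclideanSpace ℂ (Fin n),
        ‖NormedSpace.exp (t • A) z‖ ^ 2 / ‖z‖ ^ 2 ∂μ := by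
    funext t
    congr 1
    funext z
    rw [key t z]
  have hval : (∫ z : EuclideanSpace ℂ (Fin n), (2 * (inner ℂ (A z) z : ℂ).re) / ‖z‖ ^ 2 ∂μ)
      = 2 * ∫ z : EuclideanSpace ℂ (Fin n),
          (inner ℂ (Matrix.toEuclideanLin B z) z : ℂ).re / ‖z‖ ^ 2 ∂μ := by
    rw [← integral_const_mul]
    congr 1
    funext z
    have hAz : Matrix.toEuclideanLin B z = A z := rfl
    rw [hAz, mul_div_assoc]
  rw [hfun, ← hval]
  exact hmain
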